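/- Let p : ℂ → ℂ be a polynomial. If for every t > 0 we define F(t) = Σ_{v ∈ S} p_v(t)·e^{i θ_v t} with S finite, θ_v ∈ ℝ pairwise distinct, and p_v polynomials, and if F(t) tends to 0 as t → +∞, then every p_v is the zero polynomial. -/

import Mathlib

open Polynomial Filter Complex Set

private lemma hasseDeriv_natDegree_eq_C (p : Polynomial ℂ) :
    Polynomial.hasseDeriv p.natDegree p = Polynomial.C (p.coeff p.natDegree) := by
  ext n
  rw [Polynomial.hasseDeriv_coeff]
  cases n with
  | zero => simp
  | succ m =>
      rw [Polynomial.coeff_C]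
      simp only [Nat.succ_ne_zero, if_false]
      rw [Polynomial.coeff_eq_zero_of_natDegree_lt (by omega)]
      simp

private lemma taylor_coeff_natDegree' (r : ℂ) (p : Polynomial ℂ) :
    (Polynomial.taylor r p).coeff p.natDegree = p.coeff p.natDegree := by
  rw [Polynomial.taylor_coeff, hasseDeriv_natDegree_eq_C, Polynomial.eval_C]

private lemma eq_C_of_taylor_eq (r : ℂ) (hr : r ≠ 0) (p : Polynomial ℂ)
    (hp : Polynomial.taylor r p = p) : p = Polynomial.C (p.eval 0) := by
  have hev : ∀ s : ℂ, p.eval (s + r) = p.eval s := fun s => by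
    rw [← Polynomial.taylor_eval r p s, hp]
  have key : ∀ n : ℕ, p.eval (n * r) = p.eval 0 := by
    intro n
    induction n with
    | zero => simp
    | succ m ih => push_cast; rw [add_mul, one_mul, hev, ih]
  have hz : p - Polynomial.C (p.eval 0) = 0 := by
    apply Polynomial.eq_zero_of_infinite_isRoot
    apply Set.infinite_of_injective_forall_mem (f := fun n : ℕ => (n : ℂ) * r)
    · intro a b hab
      have : (a : ℂ) = b := mul_right_cancel₀ hr hab
      exact_mod_cast this
    · intro n
      simp [Polynomial.IsRoot, key n]
  linear_combination hz

open scoped Classical in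
private lemma aux16 {k : ℕ} (θ : Fin k → ℝ) (hθ : Function.Injective θ) :
    ∀ M : ℕ, ∀ p : Fin k → Polynomial ℂ,
      (∑ v, ((p v).natDegree + if p v = 0 then 0 else 1)) ≤ M →
      Filter.Tendsto
        (fun t : ℝ => ∑ v, (p v).eval (t : ℂ) * Complex.exp (Complex.I * θ v * t))
        Filter.atTop (nhds 0) →
      ∀ v, p v = 0 := by
  intro M
  induction M with
  | zero =>
      intro p hM _ v
      by_contra hv
      have h1 : 1 ≤ (p v).natDegree + if p v = 0 then 0 else 1 := by simp [hv]
      have h2 : ((p v).natDegree + if p v = 0 then 0 else 1)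
          ≤ ∑ v, ((p v).natDegree + if p v = 0 then 0 else 1) :=
        Finset.single_le_sum (f := fun v => (p v).natDegree + if p v = 0 then 0 else 1)
          (fun i _ => Nat.zero_le _) (Finset.mem_univ v)
      omega
  | succ M IH =>
      intro p hM hT
      by_cases hall : ∀ v, p v = 0
      · exact hall
      push_neg at hall
      obtain ⟨w, hw⟩ := hall
      -- choose a shift r avoiding the countable bad set
      obtain ⟨r, hr0, hre⟩ : ∃ r : ℝ, r ≠ 0 ∧ ∀ v, v ≠ w →
          Complex.exp (Complex.I * θ v * r) ≠ Complex.exp (Complex.I * θ w * r) := by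
        by_contra hcon
        push_neg at hcon
        have hsub : (Set.univ : Set ℝ) ⊆ {(0:ℝ)} ∪ ⋃ v ∈ {v : Fin k | v ≠ w},
            Set.range (fun n : ℤ => 2 * Real.pi * n / (θ v - θ w)) := by
          intro x _
          by_cases hx : x = 0
          · exact Or.inl (by simp [hx])
          obtain ⟨v, hvw, hve⟩ := hcon x hx
          refine Or.inr (Set.mem_biUnion hvw ?_)
          rw [Complex.exp_eq_exp_iff_exists_int] at hve
          obtain ⟨n, hn⟩ := hve
          refine ⟨n, ?_⟩
          have hθvw : θ v - θ w ≠ 0 := sub_ne_zero.2 (fun hh => hvw (hθ hh))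
          have h2 : (θ v : ℂ) * x = θ w * x + 2 * Real.pi * n := by
            apply mul_left_cancel₀ Complex.I_ne_zero
            rw [mul_add]
            linear_combination hn
          have h3 : θ v * x = θ w * x + 2 * Real.pi * n := by exact_mod_cast h2
          field_simp
          linarith [h3]
        have hB : (Set.univ : Set ℝ).Countable := by
          refine Set.Countable.mono hsub ?_
          refine (Set.countable_singleton 0).union ?_
          exact Set.Countable.biUnion (Set.to_countable _)
            (fun v _ => Set.countable_range _)
        exact Set.not_countable_univ hB
      set e : Fin k → ℂ := fun v => Complex.exp (Complex.I * θ v * r) with he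
      have hew : e w ≠ 0 := Complex.exp_ne_zero _
      set q : Fin k → Polynomial ℂ := fun v =>
        Polynomial.C (e v) * (Polynomial.taylor (r : ℂ) (p v)) - Polynomial.C (e w) * p v
        with hqdef
      -- coefficient of q v at top degree of p v, for v ≠ w
      have hcoeff : ∀ v, v ≠ w →
          (q v).coeff (p v).natDegree
            = (p v).coeff (p v).natDegree * (e v - e w) := by
        intro v hv
        rw [hqdef]
        simp only [Polynomial.coeff_sub, Polynomial.coeff_C_mul, taylor_coeff_natDegree']
        ring
      have hqne : ∀ v, v ≠ w → p v ≠ 0 → q v ≠ 0 ∧ (q v).natDegree = (p v).natDegree := by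
        intro v hv hpv
        have hc : (q v).coeff (p v).natDegree ≠ 0 := by
          rw [hcoeff v hv]
          exact mul_ne_zero (Polynomial.leadingCoeff_ne_zero.2 hpv)
            (sub_ne_zero.2 (hre v hv))
        constructor
        · intro h0; rw [h0] at hc; simp at hc
        · refine le_antisymm ?_ (Polynomial.le_natDegree_of_ne_zero hc)
          refine le_trans (Polynomial.natDegree_sub_le _ _) (max_le ?_ ?_)
          · exact le_trans (Polynomial.natDegree_C_mul_le _ _)
              (le_of_eq (Polynomial.natDegree_taylor _ _))
          · exact Polynomial.natDegree_C_mul_le _ _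
      have hq0 : ∀ v, p v = 0 → q v = 0 := by
        intro v hv; rw [hqdef]; simp [hv]
      -- q w
      have hqw : q w = Polynomial.C (e w) * (Polynomial.taylor (r : ℂ) (p w) - p w) := by
        rw [hqdef]; ring
      have hqwlt : (q w).natDegree + (if q w = 0 then 0 else 1)
          < (p w).natDegree + (if p w = 0 then 0 else 1) := by
        rw [if_neg hw]
        by_cases hd : Polynomial.taylor (r : ℂ) (p w) - p w = 0
        · have : q w = 0 := by rw [hqw, hd, mul_zero]
          simp [this]
        · have hqwne : q w ≠ 0 := by
            rw [hqw]
            exact mul_ne_zero (Polynomial.C_ne_zero.2 hew) hd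
          have ht : Polynomial.taylor (r : ℂ) (p w) ≠ 0 := by
            intro h0
            exact hw (Polynomial.taylor_injective (r : ℂ) (by simpa using h0))
          have hdegeq : (Polynomial.taylor (r : ℂ) (p w)).degree = (p w).degree := by
            rw [Polynomial.degree_eq_natDegree ht, Polynomial.degree_eq_natDegree hw,
              Polynomial.natDegree_taylor]
          have hdeg : (Polynomial.taylor (r : ℂ) (p w) - p w).degree < (p w).degree := by
            have hlc : (Polynomial.taylor (r : ℂ) (p w)).leadingCoeff = (p w).leadingCoeff := by
              rw [Polynomial.leadingCoeff, Polynomial.leadingCoeff,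
                Polynomial.natDegree_taylor, taylor_coeff_natDegree']
            have := Polynomial.degree_sub_lt hdegeq ht hlc
            rwa [hdegeq] at this
          have hlt : (q w).natDegree < (p w).natDegree := by
            have : (q w).natDegree = (Polynomial.taylor (r : ℂ) (p w) - p w).natDegree := by
              rw [hqw, Polynomial.natDegree_C_mul hew]
            rw [this]
            exact Polynomial.natDegree_lt_natDegree hd hdeg
          rw [if_neg hqwne]
          omega
      -- measure decreases
      have hsum : (∑ v, ((q v).natDegree + if q v = 0 then 0 else 1)) ≤ M := by
        have hlt : (∑ v, ((q v).natDegree + if q v = 0 then 0 else 1))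
            < ∑ v, ((p v).natDegree + if p v = 0 then 0 else 1) := by
          apply Finset.sum_lt_sum
          · intro v _
            rcases eq_or_ne v w with rfl | hv
            · exact le_of_lt hqwlt
            rcases eq_or_ne (p v) 0 with hpv | hpv
            · simp [hq0 v hpv, hpv]
            · obtain ⟨h1, h2⟩ := hqne v hv hpv
              simp [h1, h2, hpv]
          · exact ⟨w, Finset.mem_univ w, hqwlt⟩
        omega
      -- new tendsto
      have hshift : Filter.Tendsto
          (fun t : ℝ => ∑ v, (p v).eval ((t + r : ℝ) : ℂ)
            * Complex.exp (Complex.I * θ v * ((t + r : ℝ) : ℂ)))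
          Filter.atTop (nhds 0) :=
        hT.comp (tendsto_atTop_add_const_right atTop r tendsto_id)
      have hT2 : Filter.Tendsto
          (fun t : ℝ => ∑ v, (q v).eval (t : ℂ) * Complex.exp (Complex.I * θ v * t))
          Filter.atTop (nhds 0) := by
        have hcomb := hshift.sub (hT.const_mul (e w))
        rw [mul_zero, sub_zero] at hcomb
        refine hcomb.congr (fun t => ?_)
        rw [Finset.mul_sum, ← Finset.sum_sub_distrib]
        refine Finset.sum_congr rfl (fun v _ => ?_)
        rw [hqdef]
        simp only [Polynomial.eval_sub, Polynomial.eval_mul, Polynomial.eval_C,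
          Polynomial.taylor_eval]
        push_cast
        rw [he]
        rw [show Complex.I * θ v * (↑t + ↑r) = Complex.I * θ v * t + Complex.I * θ v * r by ring,
          Complex.exp_add]
        ring
      have hqall := IH q hsum hT2
      -- conclude p v = 0 for v ≠ w
      have hpv0 : ∀ v, v ≠ w → p v = 0 := by
        intro v hv
        by_contra hpv
        exact (hqne v hv hpv).1 (hqall v)
      -- p w is a constant
      have htay : Polynomial.taylor (r : ℂ) (p w) = p w := by
        have := hqall w
        rw [hqw, mul_eq_zero] at this
        rcases this with h1 | h1
        · exact absurd (by simpa using h1) hew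
        · exact sub_eq_zero.1 h1
      have hrC : (r : ℂ) ≠ 0 := by exact_mod_cast hr0
      have hpwC : p w = Polynomial.C ((p w).eval 0) := eq_C_of_taylor_eq _ hrC _ htay
      -- the remaining single exponential must have zero coefficient
      set c : ℂ := (p w).eval 0 with hc
      have hFeq : ∀ t : ℝ,
          (∑ v, (p v).eval (t : ℂ) * Complex.exp (Complex.I * θ v * t))
            = c * Complex.exp (Complex.I * θ w * t) := by
        intro t
        rw [Finset.sum_eq_single w]
        · rw [hpwC]; simp
        · intro v _ hv; rw [hpv0 v hv]; simp
        · intro h; exact absurd (Finset.mem_univ w) h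
      have hnorm : Filter.Tendsto
          (fun t : ℝ => ‖∑ v, (p v).eval (t : ℂ) * Complex.exp (Complex.I * θ v * t)‖)
          Filter.atTop (nhds 0) := by simpa using hT.norm
      have hconst : ∀ t : ℝ,
          ‖∑ v, (p v).eval (t : ℂ) * Complex.exp (Complex.I * θ v * t)‖ = ‖c‖ := by
        intro t
        rw [hFeq t, norm_mul, Complex.norm_exp]
        have : (Complex.I * θ w * t).re = 0 := by simp [Complex.mul_re]
        rw [this, Real.exp_zero, mul_one]
      have hc0 : ‖c‖ = 0 := by
        have h1 : Filter.Tendsto (fun _ : ℝ => ‖c‖) Filter.atTop (nhds 0) := by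
          refine hnorm.congr (fun t => (hconst t))
        exact tendsto_nhds_unique tendsto_const_nhds h1
      have hcz : c = 0 := norm_eq_zero.1 hc0
      intro v
      rcases eq_or_ne v w with rfl | hv
      · rw [hpwC, hcz, map_zero]
      · exact hpv0 v hv

/-- If a finite sum `∑ p_v(t) e^{iθ_v t}` with pairwise distinct real
frequencies `θ_v` and polynomial coefficients tends to `0` as `t → +∞`, then
all the polynomials vanish. -/
theorem stmt16 {k : ℕ} (θ : Fin k → ℝ) (hθ : Function.Injective θ)
    (p : Fin k → Polynomial ℂ)
    (h : Filter.Tendsto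
      (fun t : ℝ => ∑ v, (p v).eval (t : ℂ) * Complex.exp (Complex.I * θ v * t))
      Filter.atTop (nhds 0)) :
    ∀ v, p v = 0 := by
  classical
  exact aux16 θ hθ _ p le_rfl h
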